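/- (Error decomposition) For every t ≥ 0, the iterates satisfy d_{t+1} ≤ (1−α)^{t+1} d_0 + γ Σ_{k=0}^{t} α(1−α)^{t−k} d_k + ‖Σ_{k=0}^{t} α(1−α)^{t−k} D_k‖∞ + ‖Σ_{k=0}^{t} α(1−α)^{t−k} E_k‖∞, where d_t = ‖Q_t − Q*‖∞. -/

import Mathlib

open Finset

/-- Sup norm on `ℝ^{S×A}`: `‖Q‖∞ = max_{(s,a)} |Q(s,a)|`. -/
noncomputable def supNorm {S A : Type*} [Fintype S] [Fintype A] [Nonempty S] [Nonempty A]
    (Q : S → A → ℝ) : ℝ :=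
  Finset.univ.sup' Finset.univ_nonempty (fun p : S × A => |Q p.1 p.2|)

lemma abs_le_supNorm {S A : Type*} [Fintype S] [Fintype A] [Nonempty S] [Nonempty A]
    (Q : S → A → ℝ) (s : S) (a : A) : |Q s a| ≤ supNorm Q :=
  Finset.le_sup' (fun p : S × A => |Q p.1 p.2|) (Finset.mem_univ (s, a))

lemma iter_identity
    {S A : Type*} [Fintype S] [Fintype A] [Nonempty S] [Nonempty A]
    (α : ℝ)
    (T : (S → A → ℝ) → (S → A → ℝ))
    (Qstar : S → A → ℝ)
    (E D : ℕ → S → A → ℝ) (Q : ℕ → S → A → ℝ)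
    (hQ : ∀ t s a, Q (t + 1) s a = (1 - α) * Q t s a + α * (T (Q t) s a + E t s a + D t s a))
    (t : ℕ) (s : S) (a : A) :
    Q (t + 1) s a - Qstar s a =
      (1 - α) ^ (t + 1) * (Q 0 s a - Qstar s a)
      + (∑ k ∈ Finset.range (t + 1), α * (1 - α) ^ (t - k) * (T (Q k) s a - Qstar s a))
      + (∑ k ∈ Finset.range (t + 1), α * (1 - α) ^ (t - k) * D k s a)
      + (∑ k ∈ Finset.range (t + 1), α * (1 - α) ^ (t - k) * E k s a) := by
  induction t with
  | zero => simp [hQ 0 s a]; ring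
  | succ t ih =>
    have key : ∀ (f : ℕ → ℝ),
        ∑ k ∈ Finset.range (t + 2), α * (1 - α) ^ (t + 1 - k) * f k
        = (1 - α) * (∑ k ∈ Finset.range (t + 1), α * (1 - α) ^ (t - k) * f k) + α * f (t + 1) := by
      intro f
      rw [Finset.sum_range_succ, Finset.mul_sum]
      congr 1
      · apply Finset.sum_congr rfl
        intro k hk
        have hk' : k ≤ t := Nat.lt_succ_iff.mp (Finset.mem_range.mp hk)
        have : t + 1 - k = (t - k) + 1 := by omega
        rw [this, pow_succ]
        ring
      · simp
    rw [hQ (t + 1) s a]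
    rw [key (fun k => T (Q k) s a - Qstar s a), key (fun k => D k s a), key (fun k => E k s a)]
    have h0 : Q (t + 1) s a - Qstar s a = _ := ih
    have expand : Q (t + 1) s a = (Q (t + 1) s a - Qstar s a) + Qstar s a := by ring
    rw [expand, h0, pow_succ]
    ring

/-- (Error decomposition)  If `T` is a `γ`-contraction with fixed point `Q*`
and `Q_{t+1} = (1-α)Q_t + α(T(Q_t) + E_t + D_t)`, then
`d_{t+1} ≤ (1-α)^{t+1} d_0 + γ Σ_{k=0}^{t} α(1-α)^{t-k} d_k
  + ‖Σ_{k=0}^{t} α(1-α)^{t-k} D_k‖∞ + ‖Σ_{k=0}^{t} α(1-α)^{t-k} E_k‖∞`,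
where `d_t = ‖Q_t - Q*‖∞`. -/
theorem error_decomposition
    {S A : Type*} [Fintype S] [Fintype A] [Nonempty S] [Nonempty A]
    (γ α : ℝ) (hγ : γ ∈ Set.Ioo (0 : ℝ) 1) (hα : α ∈ Set.Ioc (0 : ℝ) 1)
    (T : (S → A → ℝ) → (S → A → ℝ))
    (hT : ∀ Q₁ Q₂ : S → A → ℝ,
      supNorm (fun s a => T Q₁ s a - T Q₂ s a) ≤ γ * supNorm (fun s a => Q₁ s a - Q₂ s a))
    (Qstar : S → A → ℝ) (hQstar : T Qstar = Qstar)
    (E D : ℕ → S → A → ℝ) (Q : ℕ → S → A → ℝ)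
    (hQ : ∀ t s a, Q (t + 1) s a = (1 - α) * Q t s a + α * (T (Q t) s a + E t s a + D t s a))
    (t : ℕ) :
    supNorm (fun s a => Q (t + 1) s a - Qstar s a) ≤
      (1 - α) ^ (t + 1) * supNorm (fun s a => Q 0 s a - Qstar s a)
      + γ * ∑ k ∈ Finset.range (t + 1),
          α * (1 - α) ^ (t - k) * supNorm (fun s a => Q k s a - Qstar s a)
      + supNorm (fun s a => ∑ k ∈ Finset.range (t + 1), α * (1 - α) ^ (t - k) * D k s a)
      + supNorm (fun s a => ∑ k ∈ Finset.range (t + 1), α * (1 - α) ^ (t - k) * E k s a) := by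
  have hα1 : 0 ≤ 1 - α := by linarith [hα.2]
  have hα0 : 0 < α := hα.1
  apply Finset.sup'_le
  rintro ⟨s, a⟩ -
  simp only
  rw [iter_identity α T Qstar E D Q hQ t s a]
  have h1 : |(1 - α) ^ (t + 1) * (Q 0 s a - Qstar s a)|
      ≤ (1 - α) ^ (t + 1) * supNorm (fun s a => Q 0 s a - Qstar s a) := by
    rw [abs_mul, abs_of_nonneg (pow_nonneg hα1 _)]
    have := abs_le_supNorm (fun s a => Q 0 s a - Qstar s a) s a
    exact mul_le_mul_of_nonneg_left this (pow_nonneg hα1 _)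
  have h2 : |∑ k ∈ Finset.range (t + 1), α * (1 - α) ^ (t - k) * (T (Q k) s a - Qstar s a)|
      ≤ γ * ∑ k ∈ Finset.range (t + 1),
          α * (1 - α) ^ (t - k) * supNorm (fun s a => Q k s a - Qstar s a) := by
    rw [Finset.mul_sum]
    refine le_trans (Finset.abs_sum_le_sum_abs _ _) (Finset.sum_le_sum ?_)
    intro k _
    have hc : 0 ≤ α * (1 - α) ^ (t - k) := mul_nonneg hα0.le (pow_nonneg hα1 _)
    rw [abs_mul, abs_of_nonneg hc]
    have hTk : |T (Q k) s a - Qstar s a| ≤ γ * supNorm (fun s a => Q k s a - Qstar s a) := by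
      have := hT (Q k) Qstar
      rw [hQstar] at this
      exact le_trans (abs_le_supNorm (fun s a => T (Q k) s a - Qstar s a) s a) this
    calc α * (1 - α) ^ (t - k) * |T (Q k) s a - Qstar s a|
        ≤ α * (1 - α) ^ (t - k) * (γ * supNorm (fun s a => Q k s a - Qstar s a)) :=
          mul_le_mul_of_nonneg_left hTk hc
      _ = γ * (α * (1 - α) ^ (t - k) * supNorm (fun s a => Q k s a - Qstar s a)) := by ring
  have h3 := abs_le_supNorm
    (fun s a => ∑ k ∈ Finset.range (t + 1), α * (1 - α) ^ (t - k) * D k s a) s a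
  have h4 := abs_le_supNorm
    (fun s a => ∑ k ∈ Finset.range (t + 1), α * (1 - α) ^ (t - k) * E k s a) s a
  calc |_ + _ + _ + _| ≤ _ := by
        refine le_trans (abs_add_le _ _) (add_le_add (le_trans (abs_add_le _ _)
          (add_le_add (le_trans (abs_add_le _ _) (add_le_add h1 h2)) h3)) h4)
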